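/- Under compound symmetry with common variance S² and common correlation ρ, for every nonempty subset A ⊆ {1,…,K} the sampling variance of the estimated factorial effect under a completely randomized assignment is Var(τ̂_A) = (4/N) (1 − (1−ρ)/2^K) S². -/

import Mathlib

open Finset

noncomputable section

/-- A treatment combination in a 2^K factorial design: each of the K factors
is at its low level (`false`, coded −1) or high level (`true`, coded +1). -/
abbrev Combo (K : ℕ) := Fin K → Bool

/-- The completely randomized assignments: each of the 2^K treatment
combinations receives exactly `r` of the `N` units. -/
def Assignments (K N r : ℕ) : Finset (Fin N → Combo K) :=
  Finset.univ.filter (fun ω => ∀ z : Combo K, (Finset.univ.filter (fun i => ω i = z)).card = r)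

/-- Expectation over the uniform distribution on completely randomized assignments. -/
def expect (K N r : ℕ) (f : (Fin N → Combo K) → ℝ) : ℝ :=
  (∑ ω ∈ Assignments K N r, f ω) / ((Assignments K N r).card : ℝ)

/-- Variance over the uniform distribution on completely randomized assignments. -/
def variance (K N r : ℕ) (f : (Fin N → Combo K) → ℝ) : ℝ :=
  expect K N r (fun ω => (f ω - expect K N r f) ^ 2)

/-- Covariance over the uniform distribution on completely randomized assignments. -/
def covariance (K N r : ℕ) (f g : (Fin N → Combo K) → ℝ) : ℝ :=
  expect K N r (fun ω => (f ω - expect K N r f) * (g ω - expect K N r g))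

/-- The assignment indicator W_i(z). -/
def Wvar (K N : ℕ) (ω : Fin N → Combo K) (i : Fin N) (z : Combo K) : ℝ :=
  if ω i = z then 1 else 0

/-- The population mean Ȳ(z) of the potential outcomes under z. -/
def Ybar (K N : ℕ) (Y : Fin N → Combo K → ℝ) (z : Combo K) : ℝ :=
  (∑ i, Y i z) / (N : ℝ)

/-- The observed treatment mean Ȳ^obs(z) = (1/r) Σ_{i : W_i(z)=1} Y_i(z). -/
def YbarObs (K N r : ℕ) (Y : Fin N → Combo K → ℝ)
    (ω : Fin N → Combo K) (z : Combo K) : ℝ :=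
  (∑ i, if ω i = z then Y i z else 0) / (r : ℝ)

/-- Finite-population variance S²(z) (divisor N−1). -/
def Ssq (K N : ℕ) (Y : Fin N → Combo K → ℝ) (z : Combo K) : ℝ :=
  (∑ i, (Y i z - Ybar K N Y z) ^ 2) / ((N : ℝ) - 1)

/-- Finite-population covariance S²(z, z*) (divisor N−1). -/
def Scov (K N : ℕ) (Y : Fin N → Combo K → ℝ) (z zs : Combo K) : ℝ :=
  (∑ i, (Y i z - Ybar K N Y z) * (Y i zs - Ybar K N Y zs)) / ((N : ℝ) - 1)

/-- The contrast g_A(z) = Π_{k ∈ A} z_k ∈ {−1, +1}. -/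
def gA (K : ℕ) (A : Finset (Fin K)) (z : Combo K) : ℝ :=
  ∏ k ∈ A, (if z k then (1 : ℝ) else -1)

/-- The unit-level factorial effect τ_{iA} = 2^{−(K−1)} Σ_z g_A(z) Y_i(z). -/
def tauUnit (K N : ℕ) (Y : Fin N → Combo K → ℝ) (A : Finset (Fin K)) (i : Fin N) : ℝ :=
  (∑ z : Combo K, gA K A z * Y i z) / (2 : ℝ) ^ (K - 1)

/-- The population-level factorial effect τ̄_A = (1/N) Σ_i τ_{iA}. -/
def tauBar (K N : ℕ) (Y : Fin N → Combo K → ℝ) (A : Finset (Fin K)) : ℝ :=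
  (∑ i, tauUnit K N Y A i) / (N : ℝ)

/-- The estimated factorial effect τ̂_A = 2^{−(K−1)} Σ_z g_A(z) Ȳ^obs(z). -/
def tauHat (K N r : ℕ) (Y : Fin N → Combo K → ℝ) (A : Finset (Fin K))
    (ω : Fin N → Combo K) : ℝ :=
  (∑ z : Combo K, gA K A z * YbarObs K N r Y ω z) / (2 : ℝ) ^ (K - 1)

/-- The finite-population variance S_A² of the unit-level factorial effects. -/
def SsqA (K N : ℕ) (Y : Fin N → Combo K → ℝ) (A : Finset (Fin K)) : ℝ :=
  (∑ i, (tauUnit K N Y A i - tauBar K N Y A) ^ 2) / ((N : ℝ) - 1)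

/-- Strict additivity: unit-level differences of potential outcomes between any
two treatment combinations are constant across units. -/
def StrictAdditivity (K N : ℕ) (Y : Fin N → Combo K → ℝ) : Prop :=
  ∀ z zs : Combo K, ∀ i i' : Fin N, Y i z - Y i zs = Y i' z - Y i' zs

/-- Compound symmetry: common variance S² > 0 and common correlation ρ,
i.e. S²(z) = S² for all z and S²(z,z*) = ρ S² for all z ≠ z*. -/
def CompoundSymmetry (K N : ℕ) (Y : Fin N → Combo K → ℝ) (S2 ρ : ℝ) : Prop :=
  0 < S2 ∧ (∀ z : Combo K, Ssq K N Y z = S2) ∧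
    ∀ z zs : Combo K, z ≠ zs → Scov K N Y z zs = ρ * S2

lemma mem_assign {K N r : ℕ} {ω : Fin N → Combo K} :
    ω ∈ Assignments K N r ↔ ∀ z : Combo K, (Finset.univ.filter (fun i => ω i = z)).card = r := by
  simp [Assignments]

lemma perm_mem {K N r : ℕ} (σ : Equiv.Perm (Fin N)) {ω : Fin N → Combo K}
    (h : ω ∈ Assignments K N r) : (ω ∘ σ) ∈ Assignments K N r := by
  rw [mem_assign] at h ⊢
  intro z
  rw [← h z]
  apply Finset.card_bij (fun i _ => σ i)
  · intro a ha; simp at ha ⊢; exact ha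
  · intro a _ b _ hab; exact σ.injective hab
  · intro b hb; exact ⟨σ.symm b, by simpa using hb, by simp⟩

lemma count_one_indep {K N r : ℕ} (i i' : Fin N) (z : Combo K) :
    ((Assignments K N r).filter (fun ω => ω i = z)).card
      = ((Assignments K N r).filter (fun ω => ω i' = z)).card := by
  apply Finset.card_bij (fun ω _ => ω ∘ Equiv.swap i i')
  · intro ω hω
    simp only [mem_filter] at hω ⊢
    exact ⟨perm_mem _ hω.1, by simpa using hω.2⟩
  · intro a _ b _ hab
    funext j
    have := congrFun hab (Equiv.swap i i' j)
    simpa using this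
  · intro ω hω
    simp only [mem_filter] at hω
    refine ⟨ω ∘ Equiv.swap i i', ?_, ?_⟩
    · simp only [mem_filter]
      exact ⟨perm_mem _ hω.1, by simpa [Equiv.swap_apply_left] using hω.2⟩
    · funext j; simp [Function.comp, Equiv.swap_apply_self]

lemma count_one {K N r : ℕ} (i : Fin N) (z : Combo K) :
    ((Assignments K N r).filter (fun ω => ω i = z)).card * N
      = r * (Assignments K N r).card := by
  have key : ∑ i' : Fin N, ((Assignments K N r).filter (fun ω => ω i' = z)).card
      = r * (Assignments K N r).card := by
    have : ∀ i' : Fin N, ((Assignments K N r).filter (fun ω => ω i' = z)).card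
        = ∑ ω ∈ Assignments K N r, (if ω i' = z then 1 else 0) := by
      intro i'; rw [Finset.card_filter]
    simp_rw [this]
    rw [Finset.sum_comm]
    rw [Finset.sum_congr rfl (fun ω hω => ?_)]
    · rw [Finset.sum_const, smul_eq_mul, mul_comm]
    · have := (mem_assign.mp hω) z
      rw [← this, Finset.card_filter]
  calc ((Assignments K N r).filter (fun ω => ω i = z)).card * N
      = ∑ i' : Fin N, ((Assignments K N r).filter (fun ω => ω i = z)).card := by
        rw [Finset.sum_const, card_univ, Fintype.card_fin, smul_eq_mul, mul_comm]
    _ = ∑ i' : Fin N, ((Assignments K N r).filter (fun ω => ω i' = z)).card :=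
        Finset.sum_congr rfl (fun i' _ => count_one_indep i i' z)
    _ = r * (Assignments K N r).card := key

lemma count_two_indep {K N r : ℕ} (i j j' : Fin N) (hj : j ≠ i) (hj' : j' ≠ i) (z zs : Combo K) :
    ((Assignments K N r).filter (fun ω => ω i = z ∧ ω j = zs)).card
      = ((Assignments K N r).filter (fun ω => ω i = z ∧ ω j' = zs)).card := by
  apply Finset.card_bij (fun ω _ => ω ∘ Equiv.swap j j')
  · intro ω hω
    simp only [mem_filter] at hω ⊢
    refine ⟨perm_mem _ hω.1, ?_, ?_⟩
    · simpa [Equiv.swap_apply_of_ne_of_ne hj.symm hj'.symm] using hω.2.1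
    · simpa [Equiv.swap_apply_right] using hω.2.2
  · intro a _ b _ hab
    funext x
    have := congrFun hab (Equiv.swap j j' x)
    simpa using this
  · intro ω hω
    simp only [mem_filter] at hω
    refine ⟨ω ∘ Equiv.swap j j', ?_, ?_⟩
    · simp only [mem_filter]
      refine ⟨perm_mem _ hω.1, ?_, ?_⟩
      · simpa [Equiv.swap_apply_of_ne_of_ne hj.symm hj'.symm] using hω.2.1
      · simpa [Equiv.swap_apply_left] using hω.2.2
    · funext x; simp [Function.comp, Equiv.swap_apply_self]

lemma count_two {K N r : ℕ} {i j : Fin N} (hij : i ≠ j) (z zs : Combo K) :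
    ((Assignments K N r).filter (fun ω => ω i = z ∧ ω j = zs)).card * (N - 1)
      = ((Assignments K N r).filter (fun ω => ω i = z)).card
          * (r - if z = zs then 1 else 0) := by
  have key : ∑ j' ∈ Finset.univ.erase i,
      ((Assignments K N r).filter (fun ω => ω i = z ∧ ω j' = zs)).card
      = ((Assignments K N r).filter (fun ω => ω i = z)).card
          * (r - if z = zs then 1 else 0) := by
    have step : ∀ j', ((Assignments K N r).filter (fun ω => ω i = z ∧ ω j' = zs)).card
        = ∑ ω ∈ Assignments K N r, (if ω i = z ∧ ω j' = zs then 1 else 0) := by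
      intro j'; rw [Finset.card_filter]
    simp_rw [step]
    rw [Finset.sum_comm]
    rw [Finset.card_filter, Finset.sum_mul]
    refine Finset.sum_congr rfl (fun ω hω => ?_)
    by_cases hiz : ω i = z
    · simp only [hiz, true_and, if_true, one_mul]
      have : ∑ j' ∈ Finset.univ.erase i, (if ω j' = zs then 1 else 0)
          = ((Finset.univ.erase i).filter (fun j' => ω j' = zs)).card := by
        rw [Finset.card_filter]
      rw [this, Finset.filter_erase, Finset.card_erase_eq_ite]
      have hc := (mem_assign.mp hω) zs
      by_cases hzz : z = zs
      · have : i ∈ Finset.univ.filter (fun j' => ω j' = zs) := by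
          simp [hiz, hzz]
        simp [this, hc, hzz]
      · have : i ∉ Finset.univ.filter (fun j' => ω j' = zs) := by
          simp [hiz, hzz]
        simp [this, hc, hzz]
    · simp [hiz]
  calc ((Assignments K N r).filter (fun ω => ω i = z ∧ ω j = zs)).card * (N - 1)
      = ∑ j' ∈ Finset.univ.erase i,
          ((Assignments K N r).filter (fun ω => ω i = z ∧ ω j = zs)).card := by
        rw [Finset.sum_const, Finset.card_erase_of_mem (Finset.mem_univ i), card_univ,
          Fintype.card_fin, smul_eq_mul, mul_comm]
    _ = ∑ j' ∈ Finset.univ.erase i,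
          ((Assignments K N r).filter (fun ω => ω i = z ∧ ω j' = zs)).card := by
        refine Finset.sum_congr rfl (fun j' hj' => ?_)
        exact count_two_indep i j j' (fun h => hij h.symm) (Finset.ne_of_mem_erase hj') z zs
    _ = _ := key

lemma card_combo (K : ℕ) : Fintype.card (Combo K) = 2 ^ K := by
  simp [Combo]

lemma assignments_nonempty (K N r : ℕ) (hN : N = r * 2 ^ K) :
    (Assignments K N r).Nonempty := by
  have hcard : Fintype.card (Combo K) = 2 ^ K := card_combo K
  let c : Fin (2 ^ K) ≃ Combo K := (Fintype.equivFinOfCardEq hcard).symm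
  let g : Fin N ≃ Fin r × Fin (2 ^ K) := (finCongr hN).trans finProdFinEquiv.symm
  refine ⟨fun i => c (g i).2, ?_⟩
  rw [mem_assign]
  intro z
  have : (Finset.univ.filter (fun i => c (g i).2 = z)).card
      = (Finset.univ : Finset (Fin r)).card := by
    apply Finset.card_bij (fun i _ => (g i).1)
    · intro a _; exact Finset.mem_univ _
    · intro a ha b hb hab
      simp only [mem_filter] at ha hb
      have h2 : (g a).2 = (g b).2 := by
        have := ha.2.trans hb.2.symm
        exact c.injective this
      have : g a = g b := Prod.ext hab h2
      exact g.injective this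
    · intro b _
      refine ⟨g.symm (b, c.symm z), ?_, ?_⟩
      · simp
      · simp
  rw [this, card_univ, Fintype.card_fin]

section ExpectLemmas
variable {K N r : ℕ}

lemma expect_sum' {α : Type*} (s : Finset α) (f : α → (Fin N → Combo K) → ℝ) :
    _root_.expect K N r (fun ω => ∑ x ∈ s, f x ω) = ∑ x ∈ s, _root_.expect K N r (f x) := by
  unfold _root_.expect
  rw [Finset.sum_comm, Finset.sum_div]

lemma expect_const_mul' (a : ℝ) (f : (Fin N → Combo K) → ℝ) :
    _root_.expect K N r (fun ω => a * f ω) = a * _root_.expect K N r f := by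
  unfold _root_.expect
  rw [← Finset.mul_sum, mul_div_assoc]

lemma expect_const' (hM : (Assignments K N r).Nonempty) (a : ℝ) :
    _root_.expect K N r (fun _ => a) = a := by
  unfold _root_.expect
  have hM0 : ((Assignments K N r).card : ℝ) ≠ 0 :=
    Nat.cast_ne_zero.mpr (Finset.card_ne_zero_of_mem hM.choose_spec)
  rw [Finset.sum_const, nsmul_eq_mul]
  field_simp

lemma variance_eq (hM : (Assignments K N r).Nonempty) (f : (Fin N → Combo K) → ℝ) :
    variance K N r f
      = _root_.expect K N r (fun ω => f ω ^ 2) - (_root_.expect K N r f) ^ 2 := by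
  unfold variance
  set μ := _root_.expect K N r f with hμ
  have h1 : (fun ω => (f ω - μ) ^ 2)
      = fun ω => f ω ^ 2 + ((-(2 * μ)) * f ω + μ ^ 2) := by
    funext ω; ring
  rw [h1]
  have e2 : _root_.expect K N r (fun ω => f ω ^ 2 + ((-(2 * μ)) * f ω + μ ^ 2))
      = _root_.expect K N r (fun ω => f ω ^ 2)
        + (_root_.expect K N r (fun ω => (-(2 * μ)) * f ω)
            + _root_.expect K N r (fun _ => μ ^ 2)) := by
    unfold _root_.expect
    rw [Finset.sum_add_distrib, Finset.sum_add_distrib, add_div, add_div]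
  rw [e2, expect_const_mul', expect_const' hM, ← hμ]
  ring

lemma expect_W (hM : (Assignments K N r).Nonempty) (hN : N ≠ 0) (i : Fin N) (z : Combo K) :
    _root_.expect K N r (fun ω => Wvar K N ω i z) = (r : ℝ) / N := by
  have hc := count_one (r := r) i z
  have hsum : ∑ ω ∈ Assignments K N r, Wvar K N ω i z
      = (((Assignments K N r).filter (fun ω => ω i = z)).card : ℝ) := by
    unfold Wvar
    rw [Finset.sum_boole]
  have hM0 : ((Assignments K N r).card : ℝ) ≠ 0 :=
    Nat.cast_ne_zero.mpr (Finset.card_ne_zero_of_mem hM.choose_spec)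
  have hNR : (N : ℝ) ≠ 0 := Nat.cast_ne_zero.mpr hN
  unfold _root_.expect
  rw [hsum]
  have hcR : (((Assignments K N r).filter (fun ω => ω i = z)).card : ℝ) * N
      = r * (Assignments K N r).card := by exact_mod_cast congrArg (Nat.cast (R := ℝ)) hc
  field_simp
  linarith [hcR]

lemma expect_WW_same (hM : (Assignments K N r).Nonempty) (hN : N ≠ 0)
    (i : Fin N) (z zs : Combo K) :
    _root_.expect K N r (fun ω => Wvar K N ω i z * Wvar K N ω i zs)
      = if z = zs then (r : ℝ) / N else 0 := by
  by_cases h : z = zs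
  · subst h
    have : (fun ω => Wvar K N ω i z * Wvar K N ω i z) = fun ω => Wvar K N ω i z := by
      funext ω; unfold Wvar; by_cases hz : ω i = z <;> simp [hz]
    rw [this, expect_W hM hN, if_pos rfl]
  · have heq : (fun ω => Wvar K N ω i z * Wvar K N ω i zs) = fun _ => (0 : ℝ) := by
      funext ω; unfold Wvar
      by_cases hz : ω i = z
      · have hz2 : ω i ≠ zs := fun hc => h (hz.symm.trans hc)
        simp [hz, hz2, h]
      · simp [hz]
    rw [heq, expect_const' hM, if_neg h]

lemma expect_WW_ne (hM : (Assignments K N r).Nonempty) (h2 : 2 ≤ N) (hr : 1 ≤ r)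
    {i j : Fin N} (hij : i ≠ j) (z zs : Combo K) :
    _root_.expect K N r (fun ω => Wvar K N ω i z * Wvar K N ω j zs)
      = (r : ℝ) * ((r : ℝ) - if z = zs then 1 else 0) / ((N : ℝ) * ((N : ℝ) - 1)) := by
  have hc2 := count_two (r := r) hij z zs
  have hc1 := count_one (r := r) i z
  have hsum : ∑ ω ∈ Assignments K N r, Wvar K N ω i z * Wvar K N ω j zs
      = (((Assignments K N r).filter (fun ω => ω i = z ∧ ω j = zs)).card : ℝ) := by
    unfold Wvar
    rw [Finset.card_filter]
    push_cast
    refine Finset.sum_congr rfl (fun ω _ => ?_)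
    by_cases h1 : ω i = z <;> by_cases hh2 : ω j = zs <;> simp [h1, hh2]
  have hM0 : ((Assignments K N r).card : ℝ) ≠ 0 :=
    Nat.cast_ne_zero.mpr (Finset.card_ne_zero_of_mem hM.choose_spec)
  have hN0 : N ≠ 0 := Nat.one_le_iff_ne_zero.mp (le_trans one_le_two h2)
  have hNR : (N : ℝ) ≠ 0 := Nat.cast_ne_zero.mpr hN0
  have hN1R : (N : ℝ) - 1 ≠ 0 := by
    have : (2 : ℝ) ≤ (N : ℝ) := by exact_mod_cast h2
    linarith
  have keyN : ((Assignments K N r).filter (fun ω => ω i = z ∧ ω j = zs)).card * ((N - 1) * N)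
      = r * (Assignments K N r).card * (r - (if z = zs then 1 else 0)) := by
    calc ((Assignments K N r).filter (fun ω => ω i = z ∧ ω j = zs)).card * ((N - 1) * N)
        = ((Assignments K N r).filter (fun ω => ω i = z ∧ ω j = zs)).card * (N - 1) * N := by
          ring
      _ = ((Assignments K N r).filter (fun ω => ω i = z)).card
            * (r - (if z = zs then 1 else 0)) * N := by rw [hc2]
      _ = ((Assignments K N r).filter (fun ω => ω i = z)).card * N
            * (r - (if z = zs then 1 else 0)) := by ring
      _ = r * (Assignments K N r).card * (r - (if z = zs then 1 else 0)) := by rw [hc1]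
  have keyR : (((Assignments K N r).filter (fun ω => ω i = z ∧ ω j = zs)).card : ℝ)
        * (((N : ℝ) - 1) * N)
      = (r : ℝ) * ((Assignments K N r).card : ℝ)
          * ((r : ℝ) - (if z = zs then 1 else 0)) := by
    have hN1 : 1 ≤ N := le_trans one_le_two h2
    have e1 : ((N - 1 : ℕ) : ℝ) = (N : ℝ) - 1 := by rw [Nat.cast_sub hN1, Nat.cast_one]
    have e2 : ((r - 1 : ℕ) : ℝ) = (r : ℝ) - 1 := by rw [Nat.cast_sub hr, Nat.cast_one]
    by_cases h : z = zs
    · simp only [h, if_true] at keyN ⊢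
      have := congrArg (Nat.cast (R := ℝ)) keyN
      push_cast [e1, e2] at this
      linear_combination this
    · simp only [h, if_false, Nat.sub_zero] at keyN ⊢
      have := congrArg (Nat.cast (R := ℝ)) keyN
      push_cast [e1] at this
      linear_combination this
  unfold _root_.expect
  rw [hsum]
  rw [div_eq_div_iff hM0 (by exact mul_ne_zero hNR hN1R)]
  linear_combination keyR
end ExpectLemmas

lemma offdiag_sum {n : ℕ} (u : Fin n → ℝ) :
    ∑ i, ∑ j ∈ Finset.univ.erase i, u i * u j = (∑ i, u i) ^ 2 - ∑ i, (u i) ^ 2 := by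
  have h : ∀ i : Fin n, ∑ j ∈ Finset.univ.erase i, u i * u j
      = u i * ((∑ j, u j) - u i) := by
    intro i
    rw [← Finset.mul_sum, Finset.sum_erase_eq_sub (Finset.mem_univ i)]
  simp_rw [h, mul_sub]
  rw [Finset.sum_sub_distrib, ← Finset.sum_mul, sq]
  congr 1
  exact Finset.sum_congr rfl (fun i _ => (sq (u i)).symm ▸ by ring)

lemma sum_dev_mul {n : ℕ} (hn : (n : ℝ) ≠ 0) (v w : Fin n → ℝ) :
    ∑ i, (v i - (∑ j, v j) / n) * (w i - (∑ j, w j) / n)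
      = ∑ i, v i * w i - (∑ i, v i) * (∑ i, w i) / n := by
  set Sv := ∑ j, v j with hSv
  set Sw := ∑ j, w j with hSw
  have expand : ∀ i, (v i - Sv / n) * (w i - Sw / n)
      = v i * w i - (Sv / n) * w i - (Sw / n) * v i + (Sv / n) * (Sw / n) := by
    intro i; ring
  simp_rw [expand]
  rw [Finset.sum_add_distrib, Finset.sum_sub_distrib, Finset.sum_sub_distrib,
    ← Finset.mul_sum, ← Finset.mul_sum, Finset.sum_const, card_univ, Fintype.card_fin,
    nsmul_eq_mul, ← hSv, ← hSw]
  field_simp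
  ring

lemma gA_sq (K : ℕ) (A : Finset (Fin K)) (z : Combo K) : gA K A z * gA K A z = 1 := by
  unfold gA
  rw [← Finset.prod_mul_distrib]
  apply Finset.prod_eq_one
  intro k _
  by_cases h : z k <;> simp [h]

lemma sum_gA_sq (K : ℕ) (A : Finset (Fin K)) :
    ∑ z : Combo K, gA K A z * gA K A z = (2 : ℝ) ^ K := by
  simp_rw [gA_sq]
  rw [Finset.sum_const, card_univ, card_combo, nsmul_eq_mul, mul_one]
  push_cast
  ring

lemma sum_gA (K : ℕ) (A : Finset (Fin K)) (hA : A.Nonempty) :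
    ∑ z : Combo K, gA K A z = 0 := by
  obtain ⟨k, hk⟩ := hA
  apply Finset.sum_ninvolution (fun z => Function.update z k (!(z k)))
  · intro z
    have h1 : ∀ w : Combo K, gA K A w
        = (if w k then (1 : ℝ) else -1) * ∏ k' ∈ A.erase k, (if w k' then (1 : ℝ) else -1) :=
      fun w => (Finset.mul_prod_erase A _ hk).symm
    rw [h1, h1]
    have h2 : ∏ k' ∈ A.erase k, (if Function.update z k (!(z k)) k' then (1 : ℝ) else -1)
        = ∏ k' ∈ A.erase k, (if z k' then (1 : ℝ) else -1) := by
      refine Finset.prod_congr rfl (fun k' hk' => ?_)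
      rw [Function.update_of_ne (Finset.ne_of_mem_erase hk')]
    rw [h2, Function.update_self]
    by_cases h : z k <;> simp [h]
  · intro z _
    intro he
    have := congrFun he k
    rw [Function.update_self] at this
    exact Bool.not_ne_self (z k) this
  · intro z; exact Finset.mem_univ _
  · intro z
    funext k'
    by_cases h : k' = k
    · subst h; simp
    · simp [Function.update_of_ne h]


set_option maxHeartbeats 2000000 in
/-- Corollary 2. Under compound symmetry,
Var(τ̂_A) = (4/N) (1 − (1−ρ)/2^K) S². -/
theorem tauHat_variance_compound_symmetry (K N r : ℕ) (hK : 1 ≤ K) (hr : 0 < r)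
    (hN : N = r * 2 ^ K) (Y : Fin N → Combo K → ℝ) (S2 ρ : ℝ)
    (hcs : CompoundSymmetry K N Y S2 ρ)
    (A : Finset (Fin K)) (hA : A.Nonempty) :
    variance K N r (tauHat K N r Y A) =
      (4 / (N : ℝ)) * (1 - (1 - ρ) / (2 : ℝ) ^ K) * S2 := by
  classical
  obtain ⟨S2pos, hvar, hcov⟩ := hcs
  have hMne : (Assignments K N r).Nonempty := assignments_nonempty K N r hN
  have h2K : 2 ≤ 2 ^ K := by
    calc 2 = 2 ^ 1 := rfl
      _ ≤ 2 ^ K := Nat.pow_le_pow_right (by norm_num) hK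
  have h2N : 2 ≤ N := by
    rw [hN]
    calc 2 ≤ 2 ^ K := h2K
      _ = 1 * 2 ^ K := (one_mul _).symm
      _ ≤ r * 2 ^ K := Nat.mul_le_mul_right _ hr
  have hr1 : 1 ≤ r := hr
  have hNR : (N : ℝ) ≠ 0 := Nat.cast_ne_zero.mpr (by omega)
  have hN1R : (N : ℝ) - 1 ≠ 0 := by
    have : (2 : ℝ) ≤ (N : ℝ) := by exact_mod_cast h2N
    linarith
  have hrR : (r : ℝ) ≠ 0 := Nat.cast_ne_zero.mpr (by omega)
  have hpowne : ((2 : ℝ)) ^ (K - 1) ≠ 0 := by positivity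
  have hpow : (2 : ℝ) ^ (K - 1) * 2 = (2 : ℝ) ^ K := by
    rw [← pow_succ]
    congr 1
    omega
  have hNreal : (N : ℝ) = (r : ℝ) * (2 : ℝ) ^ K := by
    rw [hN]; push_cast; ring
  set g : Combo K → ℝ := gA K A with hg
  set F : Fin N → Combo K → ℝ := fun i z => g z * Y i z with hF
  set c0 : ℝ := ((2 : ℝ) ^ (K - 1) * r)⁻¹ with hc0
  set T : (Fin N → Combo K) → ℝ := fun ω => ∑ i, ∑ z, F i z * Wvar K N ω i z with hT
  -- Step 1: tauHat = c0 * T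
  have tau_eq : tauHat K N r Y A = fun ω => c0 * T ω := by
    funext ω
    show tauHat K N r Y A ω = c0 * T ω
    have hrhs : T ω = ∑ z : Combo K, ∑ i : Fin N, F i z * Wvar K N ω i z :=
      Finset.sum_comm
    rw [hrhs]
    unfold tauHat YbarObs
    have hterm : ∀ z : Combo K, ∀ i : Fin N,
        F i z * Wvar K N ω i z = g z * (if ω i = z then Y i z else 0) := by
      intro z i
      rw [hF]
      unfold Wvar
      by_cases h : ω i = z <;> simp [h]
    simp_rw [hterm]
    rw [Finset.sum_div]
    rw [Finset.mul_sum]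
    refine Finset.sum_congr rfl (fun z _ => ?_)
    rw [← Finset.mul_sum]
    rw [hc0]
    field_simp
    ring
  rw [tau_eq, variance_eq hMne]
  -- Step 2: expectation of T
  have hEW : ∀ (i : Fin N) (z : Combo K),
      _root_.expect K N r (fun ω => Wvar K N ω i z) = (r : ℝ) / N :=
    expect_W hMne (by omega)
  set SF : ℝ := ∑ i, ∑ z, F i z with hSF
  have hET : _root_.expect K N r T = (r : ℝ) / N * SF := by
    rw [hT]
    rw [expect_sum']
    have : ∀ i : Fin N, _root_.expect K N r (fun ω => ∑ z, F i z * Wvar K N ω i z)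
        = ∑ z, F i z * ((r : ℝ) / N) := by
      intro i
      rw [expect_sum']
      exact Finset.sum_congr rfl (fun z _ => by rw [expect_const_mul', hEW])
    simp_rw [this]
    rw [hSF, Finset.mul_sum]
    refine Finset.sum_congr rfl (fun i _ => ?_)
    rw [Finset.mul_sum]
    exact Finset.sum_congr rfl (fun z _ => by ring)
  -- Step 3: expectation of T^2
  set Q : ℝ := ∑ i, ∑ z, F i z * F i z with hQdef
  set U : Fin N → ℝ := fun i => ∑ z, F i z with hU
  set V : Combo K → ℝ := fun z => ∑ i, F i z with hV
  set aa : ℝ := (r : ℝ) * r / ((N : ℝ) * ((N : ℝ) - 1)) with haa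
  set bb : ℝ := (r : ℝ) / ((N : ℝ) * ((N : ℝ) - 1)) with hbb
  have hET2 : _root_.expect K N r (fun ω => T ω ^ 2)
      = (r : ℝ) / N * Q + aa * (SF ^ 2 - ∑ i, U i ^ 2)
          - bb * ((∑ z, V z ^ 2) - Q) := by
    have texp : (fun ω => T ω ^ 2) = fun ω => ∑ i, ∑ j, ∑ z, ∑ zs,
        (F i z * F j zs) * (Wvar K N ω i z * Wvar K N ω j zs) := by
      funext ω
      show T ω ^ 2 = _
      have h1 : T ω ^ 2 = (∑ i, ∑ z, F i z * Wvar K N ω i z)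
          * (∑ j, ∑ zs, F j zs * Wvar K N ω j zs) := by rw [sq]
      rw [h1, Finset.sum_mul_sum]
      refine Finset.sum_congr rfl (fun i _ => ?_)
      refine Finset.sum_congr rfl (fun j _ => ?_)
      rw [Finset.sum_mul_sum]
      refine Finset.sum_congr rfl (fun z _ => ?_)
      refine Finset.sum_congr rfl (fun zs _ => ?_)
      ring
    rw [texp]
    have hpoint : ∀ (i j : Fin N) (z zs : Combo K),
        _root_.expect K N r
          (fun ω => (F i z * F j zs) * (Wvar K N ω i z * Wvar K N ω j zs))
        = F i z * F j zs * (if i = j then (if z = zs then (r : ℝ) / N else 0)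
            else ((r : ℝ) * ((r : ℝ) - if z = zs then 1 else 0)
              / ((N : ℝ) * ((N : ℝ) - 1)))) := by
      intro i j z zs
      rw [expect_const_mul']
      congr 1
      by_cases hij : i = j
      · subst hij
        rw [expect_WW_same hMne (by omega), if_pos rfl]
      · rw [expect_WW_ne hMne h2N hr1 hij, if_neg hij]
    have e1 : _root_.expect K N r (fun ω => ∑ i, ∑ j, ∑ z, ∑ zs,
        (F i z * F j zs) * (Wvar K N ω i z * Wvar K N ω j zs))
        = ∑ i, ∑ j, ∑ z, ∑ zs, F i z * F j zs
            * (if i = j then (if z = zs then (r : ℝ) / N else 0)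
              else ((r : ℝ) * ((r : ℝ) - if z = zs then 1 else 0)
                / ((N : ℝ) * ((N : ℝ) - 1)))) := by
      rw [expect_sum']
      refine Finset.sum_congr rfl (fun i _ => ?_)
      rw [expect_sum']
      refine Finset.sum_congr rfl (fun j _ => ?_)
      rw [expect_sum']
      refine Finset.sum_congr rfl (fun z _ => ?_)
      rw [expect_sum']
      exact Finset.sum_congr rfl (fun zs _ => hpoint i j z zs)
    rw [e1]
    -- split the j-sum into j = i and j ≠ i
    have hsplit : ∀ i : Fin N, ∑ j, ∑ z, ∑ zs, F i z * F j zs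
          * (if i = j then (if z = zs then (r : ℝ) / N else 0)
            else ((r : ℝ) * ((r : ℝ) - if z = zs then 1 else 0)
              / ((N : ℝ) * ((N : ℝ) - 1))))
        = ((r : ℝ) / N * ∑ z, F i z * F i z)
            + ∑ j ∈ Finset.univ.erase i, (aa * (U i * U j) - bb * ∑ z, F i z * F j z) := by
      intro i
      rw [← Finset.add_sum_erase Finset.univ _ (Finset.mem_univ i)]
      congr 1
      · -- diagonal term j = i
        have hd : ∀ z zs : Combo K,
            F i z * F i zs * (if i = i then (if z = zs then (r : ℝ) / N else 0)
              else ((r : ℝ) * ((r : ℝ) - if z = zs then 1 else 0)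
                / ((N : ℝ) * ((N : ℝ) - 1))))
            = if z = zs then F i z * F i zs * ((r : ℝ) / N) else 0 := by
          intro z zs
          rw [if_pos rfl]
          by_cases h : z = zs <;> simp [h]
        rw [Finset.mul_sum]
        refine Finset.sum_congr rfl (fun z _ => ?_)
        rw [Finset.sum_congr rfl (fun zs _ => hd z zs), Finset.sum_ite_eq,
          if_pos (Finset.mem_univ z)]
        ring
      · -- off-diagonal terms
        refine Finset.sum_congr rfl (fun j hj => ?_)
        have hij : i ≠ j := fun h => (Finset.ne_of_mem_erase hj) h.symm
        simp only [if_neg hij]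
        have hval : ∀ z zs : Combo K,
            F i z * F j zs * ((r : ℝ) * ((r : ℝ) - if z = zs then 1 else 0)
              / ((N : ℝ) * ((N : ℝ) - 1)))
            = aa * (F i z * F j zs)
                - (if z = zs then bb * (F i z * F j zs) else 0) := by
          intro z zs
          by_cases h : z = zs
          · simp only [h, if_pos rfl, if_true]
            rw [haa, hbb]
            field_simp
          · simp only [if_neg h]
            rw [haa]
            field_simp
            ring
        simp_rw [hval]
        have h1 : ∀ z : Combo K,
            ∑ zs, (aa * (F i z * F j zs) - (if z = zs then bb * (F i z * F j zs) else 0))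
            = aa * (F i z * U j) - bb * (F i z * F j z) := by
          intro z
          rw [Finset.sum_sub_distrib]
          congr 1
          · rw [← Finset.mul_sum, ← Finset.mul_sum, hU]
          · rw [Finset.sum_ite_eq]
            simp only [Finset.mem_univ, ite_true]
        simp_rw [h1]
        rw [Finset.sum_sub_distrib]
        congr 1
        · rw [← Finset.mul_sum, ← Finset.sum_mul, hU]
        · rw [← Finset.mul_sum]
    simp_rw [hsplit]
    rw [Finset.sum_add_distrib]
    have hUU : ∑ i, ∑ j ∈ Finset.univ.erase i, (aa * (U i * U j) - bb * ∑ z, F i z * F j z)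
        = aa * (∑ i, ∑ j ∈ Finset.univ.erase i, U i * U j)
          - bb * (∑ i, ∑ j ∈ Finset.univ.erase i, ∑ z, F i z * F j z) := by
      rw [Finset.mul_sum, Finset.mul_sum, ← Finset.sum_sub_distrib]
      refine Finset.sum_congr rfl (fun i _ => ?_)
      rw [Finset.mul_sum, Finset.mul_sum, ← Finset.sum_sub_distrib]
    have hU2 : ∑ i, ∑ j ∈ Finset.univ.erase i, U i * U j = SF ^ 2 - ∑ i, U i ^ 2 := by
      rw [offdiag_sum U, hSF]
    have hC2 : ∑ i, ∑ j ∈ Finset.univ.erase i, ∑ z, F i z * F j z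
        = (∑ z, V z ^ 2) - Q := by
      have swap1 : ∑ i, ∑ j ∈ Finset.univ.erase i, ∑ z, F i z * F j z
          = ∑ z : Combo K, ∑ i, ∑ j ∈ Finset.univ.erase i, F i z * F j z := by
        rw [Finset.sum_comm]
        refine Finset.sum_congr rfl (fun i _ => ?_)
        rw [Finset.sum_comm]
      rw [swap1]
      have : ∀ z : Combo K, ∑ i, ∑ j ∈ Finset.univ.erase i, F i z * F j z
          = V z ^ 2 - ∑ i, (F i z) ^ 2 := by
        intro z
        rw [offdiag_sum (fun i => F i z), hV]
      simp_rw [this]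
      rw [Finset.sum_sub_distrib]
      congr 1
      rw [hQdef,
        Finset.sum_comm (s := (Finset.univ : Finset (Fin N)))
          (t := (Finset.univ : Finset (Combo K)))]
      refine Finset.sum_congr rfl (fun z _ => ?_)
      exact Finset.sum_congr rfl (fun i _ => sq (F i z))
    rw [hUU, hU2, hC2]
    have hQ1 : ∑ i, ((r : ℝ) / N * ∑ z, F i z * F i z) = (r : ℝ) / N * Q := by
      rw [hQdef, Finset.mul_sum]
    rw [hQ1]
    ring

  -- Step 4: assemble and use compound symmetry
  show _root_.expect K N r (fun ω => (c0 * T ω) ^ 2)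
      - (_root_.expect K N r fun ω => c0 * T ω) ^ 2 = _
  have eA : _root_.expect K N r (fun ω => (c0 * T ω) ^ 2)
      = c0 ^ 2 * _root_.expect K N r (fun ω => T ω ^ 2) := by
    have h : (fun ω => (c0 * T ω) ^ 2) = fun ω => c0 ^ 2 * T ω ^ 2 := by
      funext ω; ring
    rw [h, expect_const_mul']
  have eB : (_root_.expect K N r fun ω => c0 * T ω) = c0 * _root_.expect K N r T :=
    expect_const_mul' _ _
  rw [eA, eB, hET, hET2]
  have hgsq : ∀ z : Combo K, g z * g z = 1 := gA_sq K A
  have hgsum : ∑ z : Combo K, g z = 0 := sum_gA K A hA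
  have hgsumsq : ∑ z : Combo K, g z * g z = (2 : ℝ) ^ K := sum_gA_sq K A
  -- compound symmetry: second moments
  have csu : ∀ z zs : Combo K, ∑ i, Y i z * Y i zs
      = ((N : ℝ) - 1) * ρ * S2 + (∑ i, Y i z) * (∑ i, Y i zs) / N
          + (if z = zs then ((N : ℝ) - 1) * (1 - ρ) * S2 else 0) := by
    intro z zs
    have hd := sum_dev_mul hNR (fun i => Y i z) (fun i => Y i zs)
    by_cases h : z = zs
    · subst h
      have hz := hvar z
      unfold Ssq at hz
      rw [div_eq_iff hN1R] at hz
      have hsq : ∑ i, (Y i z - Ybar K N Y z) ^ 2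
          = ∑ i, (Y i z - (∑ j, Y j z) / N) * (Y i z - (∑ j, Y j z) / N) := by
        refine Finset.sum_congr rfl (fun i _ => ?_)
        rw [sq]
        rfl
      rw [hsq, hd] at hz
      rw [if_pos rfl]
      linear_combination hz
    · have hz := hcov z zs h
      unfold Scov at hz
      rw [div_eq_iff hN1R] at hz
      have hsq : ∑ i, (Y i z - Ybar K N Y z) * (Y i zs - Ybar K N Y zs)
          = ∑ i, (Y i z - (∑ j, Y j z) / N) * (Y i zs - (∑ j, Y j zs) / N) := rfl
      rw [hsq, hd] at hz
      rw [if_neg h]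
      linear_combination hz
  have hYY : ∀ z : Combo K, ∑ i, Y i z * Y i z
      = ((N : ℝ) - 1) * S2 + (∑ i, Y i z) * (∑ i, Y i z) / N := by
    intro z
    rw [csu z z, if_pos rfl]
    ring
  -- Q in closed form
  have hQv : Q = (2 : ℝ) ^ K * (((N : ℝ) - 1) * S2)
      + (∑ z : Combo K, (∑ i, Y i z) * (∑ i, Y i z)) / N := by
    have h1 : Q = ∑ z : Combo K, ∑ i, Y i z * Y i z := by
      rw [hQdef,
        Finset.sum_comm (s := (Finset.univ : Finset (Fin N)))
          (t := (Finset.univ : Finset (Combo K)))]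
      refine Finset.sum_congr rfl (fun z _ => Finset.sum_congr rfl (fun i _ => ?_))
      show (fun i z => g z * Y i z) i z * (fun i z => g z * Y i z) i z = Y i z * Y i z
      simp only
      linear_combination (Y i z * Y i z) * hgsq z
    rw [h1]
    simp_rw [hYY]
    rw [Finset.sum_add_distrib, Finset.sum_const, card_univ, card_combo,
      nsmul_eq_mul, ← Finset.sum_div]
    push_cast
    ring
  -- ∑ V² in closed form
  have hPVv : ∑ z, V z ^ 2 = ∑ z : Combo K, (∑ i, Y i z) * (∑ i, Y i z) := by
    refine Finset.sum_congr rfl (fun z _ => ?_)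
    have h1 : V z = g z * ∑ i, Y i z := by
      show (∑ i, F i z) = _
      rw [hF, ← Finset.mul_sum]
    rw [h1]
    linear_combination ((∑ i, Y i z) * (∑ i, Y i z)) * hgsq z
  -- SF in closed form
  have hSFv : SF = ∑ z : Combo K, g z * (∑ i, Y i z) := by
    rw [hSF]
    rw [Finset.sum_comm (s := (Finset.univ : Finset (Fin N)))
        (t := (Finset.univ : Finset (Combo K)))]
    refine Finset.sum_congr rfl (fun z _ => ?_)
    rw [← Finset.mul_sum]
  -- ∑ U² in closed form
  have hSUv : ∑ i, U i ^ 2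
      = (∑ z : Combo K, g z * (∑ i, Y i z)) * (∑ z : Combo K, g z * (∑ i, Y i z)) / N
          + (1 - ρ) * ((N : ℝ) - 1) * S2 * (2 : ℝ) ^ K := by
    have h1 : ∀ i, U i ^ 2 = ∑ z : Combo K, ∑ zs : Combo K,
        (g z * g zs) * (Y i z * Y i zs) := by
      intro i
      have hu : U i = ∑ z, g z * Y i z := rfl
      rw [hu, sq, Finset.sum_mul_sum]
      exact Finset.sum_congr rfl (fun z _ =>
        Finset.sum_congr rfl (fun zs _ => by ring))
    simp_rw [h1]
    have h2 : ∑ i, ∑ z : Combo K, ∑ zs : Combo K, (g z * g zs) * (Y i z * Y i zs)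
        = ∑ z : Combo K, ∑ zs : Combo K, (g z * g zs) * ∑ i, Y i z * Y i zs := by
      rw [Finset.sum_comm (s := (Finset.univ : Finset (Fin N)))
          (t := (Finset.univ : Finset (Combo K)))]
      refine Finset.sum_congr rfl (fun z _ => ?_)
      rw [Finset.sum_comm (s := (Finset.univ : Finset (Fin N)))
          (t := (Finset.univ : Finset (Combo K)))]
      refine Finset.sum_congr rfl (fun zs _ => ?_)
      rw [Finset.mul_sum]
    rw [h2]
    have h3 : ∀ z zs : Combo K, (g z * g zs) * (∑ i, Y i z * Y i zs)
        = ((N : ℝ) - 1) * ρ * S2 * (g z * g zs)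
            + (g z * (∑ i, Y i z)) * (g zs * (∑ i, Y i zs)) / N
            + (if z = zs then (g z * g zs) * (((N : ℝ) - 1) * (1 - ρ) * S2) else 0) := by
      intro z zs
      rw [csu z zs]
      by_cases h : z = zs
      · subst h
        simp only [eq_self_iff_true, if_true]
        ring
      · simp only [if_neg h]
        ring
    simp_rw [h3]
    simp only [Finset.sum_add_distrib]
    have tA : ∑ z : Combo K, ∑ zs : Combo K,
        ((N : ℝ) - 1) * ρ * S2 * (g z * g zs) = 0 := by
      have e : ∑ z : Combo K, ∑ zs : Combo K, ((N : ℝ) - 1) * ρ * S2 * (g z * g zs)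
          = (((N : ℝ) - 1) * ρ * S2) * ((∑ z : Combo K, g z) * (∑ zs : Combo K, g zs)) := by
        rw [Finset.sum_mul_sum, Finset.mul_sum]
        refine Finset.sum_congr rfl (fun z _ => ?_)
        rw [Finset.mul_sum]
      rw [e, hgsum]
      ring
    have tB : ∑ z : Combo K, ∑ zs : Combo K,
        (g z * (∑ i, Y i z)) * (g zs * (∑ i, Y i zs)) / N
        = (∑ z : Combo K, g z * (∑ i, Y i z))
            * (∑ z : Combo K, g z * (∑ i, Y i z)) / N := by
      have e : ∀ z : Combo K, ∑ zs : Combo K,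
          (g z * (∑ i, Y i z)) * (g zs * (∑ i, Y i zs)) / N
          = (g z * (∑ i, Y i z)) * (∑ zs : Combo K, g zs * (∑ i, Y i zs)) / N := by
        intro z
        rw [← Finset.sum_div, ← Finset.mul_sum]
      simp_rw [e]
      rw [← Finset.sum_div, ← Finset.sum_mul]
    have tC : ∑ z : Combo K, ∑ zs : Combo K,
        (if z = zs then (g z * g zs) * (((N : ℝ) - 1) * (1 - ρ) * S2) else 0)
        = (2 : ℝ) ^ K * (((N : ℝ) - 1) * (1 - ρ) * S2) := by
      have e : ∀ z : Combo K, ∑ zs : Combo K,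
          (if z = zs then (g z * g zs) * (((N : ℝ) - 1) * (1 - ρ) * S2) else 0)
          = (g z * g z) * (((N : ℝ) - 1) * (1 - ρ) * S2) := by
        intro z
        rw [Finset.sum_ite_eq, if_pos (Finset.mem_univ z)]
      simp_rw [e]
      rw [← Finset.sum_mul, hgsumsq]
    rw [tA, tB, tC]
    ring
  rw [hQv, hPVv, hSFv, hSUv, haa, hbb, hc0]
  rw [hNreal, ← hpow]
  have hrne : (r : ℝ) ≠ 0 := hrR
  have hp2 : ((2 : ℝ) ^ (K - 1)) ≠ 0 := hpowne
  have hden : (r : ℝ) * (2 ^ (K - 1) * 2) - 1 ≠ 0 := by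
    rw [hpow, ← hNreal]
    exact fun h => hN1R (by linarith)
  have hden2 : (2 : ℝ) ^ (K - 1) * r * 2 - 1 ≠ 0 := by
    convert hden using 1; ring
  field_simp
  ring
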